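/- Let (a_{ij})_{i,j ≥ 0} and (b_j)_{j ≥ 0} be families of rational numbers with only finitely many nonzero entries, and let c be a rational number. For each nonnegative integer s set Q(s) = Σ_{i,j ≥ 0} a_{ij} f_{s+i} f_{s+j} + Σ_{j ≥ 0} b_j f_{2s+j} + (−1)^s c. If Q(s) = 0 for three pairwise distinct nonnegative integers s, then Q(s) = 0 for all nonnegative integers s. Moreover, if all a_{ij} = 0 and c = 0 (so Q is homogeneous and linear), then Q(s) = 0 for two distinct nonnegative integers s already implies Q(s) = 0 for all nonnegative integers s. -/

import Mathlib

open Real Finset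
open scoped goldenRatio

private lemma pow_inj_one_lt {x : ℝ} (hx : 1 < x) {m n : ℕ} (h : x ^ m = x ^ n) : m = n := by
  by_contra hmn
  rcases Nat.lt_or_ge m n with hlt | hge
  · exact absurd h (ne_of_lt (pow_lt_pow_right₀ hx hlt))
  · have hlt : n < m := by omega
    exact absurd h.symm (ne_of_lt (pow_lt_pow_right₀ hx hlt))

private lemma quad_zero {A D B x y z : ℝ}
    (hx : A * x ^ 2 + D * x + B = 0) (hy : A * y ^ 2 + D * y + B = 0)
    (hz : A * z ^ 2 + D * z + B = 0)
    (hxy : x ≠ y) (hxz : x ≠ z) (hyz : y ≠ z) :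
    A = 0 ∧ D = 0 ∧ B = 0 := by
  have e1 : A * (x + y) + D = 0 := by
    have h : (x - y) * (A * (x + y) + D) = 0 := by linear_combination hx - hy
    rcases mul_eq_zero.mp h with h | h
    · exact absurd (sub_eq_zero.mp h) hxy
    · exact h
  have e2 : A * (x + z) + D = 0 := by
    have h : (x - z) * (A * (x + z) + D) = 0 := by linear_combination hx - hz
    rcases mul_eq_zero.mp h with h | h
    · exact absurd (sub_eq_zero.mp h) hxz
    · exact h
  have hA : A = 0 := by
    have h : A * (y - z) = 0 := by linear_combination e1 - e2
    rcases mul_eq_zero.mp h with h | h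
    · exact h
    · exact absurd (sub_eq_zero.mp h) hyz
  have hD : D = 0 := by linear_combination e1 - (x + y) * hA
  exact ⟨hA, hD, by linear_combination hx - x ^ 2 * hA - x * hD⟩

/-- **Proposition 3.5 (prop:proof).** Let `Q(s) = Σ_{i,j} a_{ij} f_{s+i} f_{s+j}
+ Σ_j b_j f_{2s+j} + (−1)^s c` with finitely many nonzero coefficients.  If
`Q(s) = 0` for three pairwise distinct nonnegative integers `s`, then `Q(s) = 0`
for all `s`.  If moreover the relation is homogeneous and linear (all
`a_{ij} = 0` and `c = 0`), two distinct values of `s` suffice. -/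
theorem stmt_12 (a : ℕ → ℕ → ℚ) (b : ℕ → ℚ) (c : ℚ)
    (ha : {p : ℕ × ℕ | a p.1 p.2 ≠ 0}.Finite)
    (hb : {j : ℕ | b j ≠ 0}.Finite)
    (Q : ℕ → ℚ)
    (hQ : ∀ s : ℕ, Q s =
      (∑ᶠ p : ℕ × ℕ, a p.1 p.2 * (Nat.fib (s + p.1) : ℚ) * (Nat.fib (s + p.2) : ℚ))
        + (∑ᶠ j : ℕ, b j * (Nat.fib (2 * s + j) : ℚ)) + (-1) ^ s * c) :
    (∀ s₀ s₁ s₂ : ℕ, s₀ ≠ s₁ → s₀ ≠ s₂ → s₁ ≠ s₂ →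
      Q s₀ = 0 → Q s₁ = 0 → Q s₂ = 0 → ∀ s : ℕ, Q s = 0) ∧
    ((∀ i j : ℕ, a i j = 0) → c = 0 →
      ∀ s₀ s₁ : ℕ, s₀ ≠ s₁ → Q s₀ = 0 → Q s₁ = 0 → ∀ s : ℕ, Q s = 0) := by
  classical
  have hs5 : Real.sqrt 5 ≠ 0 := by positivity
  have h55 : Real.sqrt 5 * Real.sqrt 5 = 5 := Real.mul_self_sqrt (by norm_num)
  have hXY : ∀ s : ℕ, φ ^ s * ψ ^ s = (-1 : ℝ) ^ s := by
    intro s; rw [← mul_pow, goldenRatio_mul_goldenConj]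
  have hφsq : ∀ s : ℕ, (φ ^ 2) ^ s = φ ^ s * φ ^ s := by
    intro s; rw [← pow_mul, two_mul, pow_add]
  have hψsq : ∀ s : ℕ, (ψ ^ 2) ^ s = ψ ^ s * ψ ^ s := by
    intro s; rw [← pow_mul, two_mul, pow_add]
  have hone : ∀ s : ℕ, (ψ ^ 2) ^ s * (φ ^ 2) ^ s = 1 := by
    intro s
    rw [← mul_pow, ← mul_pow, mul_comm ψ φ, goldenRatio_mul_goldenConj]
    norm_num
  have hgold1 : (1 : ℝ) < φ ^ 2 := one_lt_pow₀ one_lt_goldenRatio two_ne_zero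
  -- distinctness of t s = (-1)^s * (φ^2)^s
  have htinj : ∀ {m n : ℕ}, m ≠ n →
      (-1 : ℝ) ^ m * (φ ^ 2) ^ m ≠ (-1 : ℝ) ^ n * (φ ^ 2) ^ n := by
    intro m n hmn h
    apply hmn
    have habs := congrArg abs h
    have hpos : (0 : ℝ) < φ ^ 2 := by positivity
    simp only [abs_mul, abs_pow, abs_neg, abs_one, one_pow, one_mul,
      abs_of_pos goldenRatio_pos] at habs
    exact pow_inj_one_lt hgold1 habs
  -- rewrite the finsums as finite sums
  have hsum_a : ∀ s : ℕ,
      (∑ᶠ p : ℕ × ℕ, a p.1 p.2 * (Nat.fib (s + p.1) : ℚ) * (Nat.fib (s + p.2) : ℚ)) =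
      ∑ p ∈ ha.toFinset, a p.1 p.2 * (Nat.fib (s + p.1) : ℚ) * (Nat.fib (s + p.2) : ℚ) := by
    intro s
    apply finsum_eq_sum_of_support_subset
    intro p hp
    simp only [Function.mem_support] at hp
    rw [Set.Finite.coe_toFinset]
    exact fun h => hp (by rw [h, zero_mul, zero_mul])
  have hsum_b : ∀ s : ℕ,
      (∑ᶠ j : ℕ, b j * (Nat.fib (2 * s + j) : ℚ)) =
      ∑ j ∈ hb.toFinset, b j * (Nat.fib (2 * s + j) : ℚ) := by
    intro s
    apply finsum_eq_sum_of_support_subset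
    intro j hj
    simp only [Function.mem_support] at hj
    rw [Set.Finite.coe_toFinset]
    exact fun h => hj (by rw [h, zero_mul])
  -- representation of the quadratic part
  obtain ⟨Aa, Ba, Da, harep⟩ : ∃ Aa Ba Da : ℝ, ∀ s : ℕ,
      ((∑ᶠ p : ℕ × ℕ, a p.1 p.2 * (Nat.fib (s + p.1) : ℚ) * (Nat.fib (s + p.2) : ℚ) : ℚ) : ℝ) =
        Aa * (φ ^ 2) ^ s + Ba * (ψ ^ 2) ^ s + Da * (-1) ^ s := by
    refine ⟨∑ p ∈ ha.toFinset, (a p.1 p.2 : ℝ) / 5 * (φ ^ p.1 * φ ^ p.2),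
      ∑ p ∈ ha.toFinset, (a p.1 p.2 : ℝ) / 5 * (ψ ^ p.1 * ψ ^ p.2),
      ∑ p ∈ ha.toFinset, -(a p.1 p.2 : ℝ) / 5 * (φ ^ p.1 * ψ ^ p.2 + ψ ^ p.1 * φ ^ p.2),
      fun s => ?_⟩
    rw [hsum_a s]
    push_cast
    rw [Finset.sum_mul, Finset.sum_mul, Finset.sum_mul, ← Finset.sum_add_distrib,
      ← Finset.sum_add_distrib]
    refine Finset.sum_congr rfl fun p _ => ?_
    rw [Real.coe_fib_eq, Real.coe_fib_eq]
    rw [hφsq s, hψsq s]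
    rw [pow_add, pow_add, pow_add, pow_add]
    rw [mul_assoc, div_mul_div_comm, h55]
    linear_combination (-(a p.1 p.2 : ℝ) / 5 * (φ ^ p.1 * ψ ^ p.2 + ψ ^ p.1 * φ ^ p.2)) * hXY s
  -- representation of the linear part
  obtain ⟨Ab, Bb, hbrep⟩ : ∃ Ab Bb : ℝ, ∀ s : ℕ,
      ((∑ᶠ j : ℕ, b j * (Nat.fib (2 * s + j) : ℚ) : ℚ) : ℝ) =
        Ab * (φ ^ 2) ^ s + Bb * (ψ ^ 2) ^ s := by
    refine ⟨∑ j ∈ hb.toFinset, (b j : ℝ) * φ ^ j / Real.sqrt 5,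
      ∑ j ∈ hb.toFinset, -((b j : ℝ) * ψ ^ j) / Real.sqrt 5, fun s => ?_⟩
    rw [hsum_b s]
    push_cast
    rw [Finset.sum_mul, Finset.sum_mul, ← Finset.sum_add_distrib]
    refine Finset.sum_congr rfl fun j _ => ?_
    rw [Real.coe_fib_eq, pow_add, pow_add, pow_mul, pow_mul]
    field_simp
    ring
  constructor
  · -- Part 1 : three zeros suffice in general
    intro s₀ s₁ s₂ h01 h02 h12 hz0 hz1 hz2 s
    have key : ∀ s : ℕ, (Q s : ℝ) =
        (Aa + Ab) * (φ ^ 2) ^ s + (Ba + Bb) * (ψ ^ 2) ^ s + (Da + c) * (-1) ^ s := by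
      intro s
      rw [hQ s]
      push_cast
      rw [harep s, hbrep s]
      ring
    have hP : ∀ s : ℕ, Q s = 0 →
        (Aa + Ab) * ((-1 : ℝ) ^ s * (φ ^ 2) ^ s) ^ 2 +
          (Da + (c : ℝ)) * ((-1 : ℝ) ^ s * (φ ^ 2) ^ s) + (Ba + Bb) = 0 := by
      intro s hsz
      have hg : ((Q s : ℚ) : ℝ) = 0 := by rw [hsz]; norm_num
      rw [key s] at hg
      have he : ((-1 : ℝ) ^ s) ^ 2 = 1 := by
        rw [← pow_mul, mul_comm, pow_mul]; norm_num
      linear_combination (φ ^ 2) ^ s * hg + (Aa + Ab) * ((φ ^ 2) ^ s) ^ 2 * he -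
        (Ba + Bb) * hone s
    obtain ⟨hA, hD, hB⟩ := quad_zero (hP s₀ hz0) (hP s₁ hz1) (hP s₂ hz2)
      (htinj h01) (htinj h02) (htinj h12)
    have : (Q s : ℝ) = 0 := by rw [key s, hA, hB, hD]; ring
    exact_mod_cast this
  · -- Part 2 : homogeneous linear case, two zeros suffice
    intro ha0 hc0 s₀ s₁ h01 hz0 hz1 s
    have key : ∀ s : ℕ, (Q s : ℝ) = Ab * (φ ^ 2) ^ s + Bb * (ψ ^ 2) ^ s := by
      intro s
      rw [hQ s]
      simp only [ha0, zero_mul, finsum_zero, hc0, mul_zero, zero_add, add_zero]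
      exact hbrep s
    have hP : ∀ s : ℕ, Q s = 0 → Ab * ((φ ^ 2) ^ s) ^ 2 + Bb = 0 := by
      intro s hsz
      have hg : ((Q s : ℚ) : ℝ) = 0 := by rw [hsz]; norm_num
      rw [key s] at hg
      linear_combination (φ ^ 2) ^ s * hg - Bb * hone s
    have hA : Ab = 0 := by
      have h : Ab * (((φ ^ 2) ^ s₀) ^ 2 - ((φ ^ 2) ^ s₁) ^ 2) = 0 := by
        linear_combination hP s₀ hz0 - hP s₁ hz1
      rcases mul_eq_zero.mp h with h | h
      · exact h
      · exfalso
        apply h01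
        have hsq : (φ ^ 2) ^ (2 * s₀) = (φ ^ 2) ^ (2 * s₁) := by
          rw [mul_comm 2 s₀, mul_comm 2 s₁, pow_mul, pow_mul]
          linarith [sub_eq_zero.mp h]
        have := pow_inj_one_lt hgold1 hsq
        omega
    have hB : Bb = 0 := by
      have := hP s₀ hz0
      rw [hA] at this
      linarith
    have : (Q s : ℝ) = 0 := by rw [key s, hA, hB]; ring
    exact_mod_cast this
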